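/- For every nonnegative integer n and suitably bounded complex a (with a not in {0,-1,-2,...} and a+n+1 not a nonpositive integer), the sum ∑_{k=0}^n [(a)_k (a-1)_k (-n)_k (1+a/2)_k] / [(2)_k (a/2)_k (n+a+1)_k] · (-1)^k / k! equals (a+1)_n / (n+1)!. -/

import Mathlib

open Real Finset

noncomputable def poch (a : ℂ) : ℕ → ℂ
  | 0 => 1
  | (n+1) => poch a n * (a + n)

lemma poch_succ (x : ℂ) (k : ℕ) : poch x (k+1) = poch x k * (x + k) := rfl

lemma poch_ne_zero (x : ℂ) (h : ∀ j : ℕ, x + (j:ℂ) ≠ 0) (k : ℕ) : poch x k ≠ 0 := by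
  induction k with
  | zero => simp [poch]
  | succ k ih => exact mul_ne_zero ih (h k)

lemma poch_two (k : ℕ) : poch 2 k = (Nat.factorial (k+1) : ℂ) := by
  induction k with
  | zero => simp [poch]
  | succ k ih =>
    rw [poch_succ, ih]
    push_cast [Nat.factorial_succ]
    ring

lemma poch_shift (x : ℂ) (k : ℕ) : poch (x+1) k * x = poch x k * (x + k) := by
  induction k with
  | zero => simp [poch]
  | succ k ih =>
    rw [poch_succ, poch_succ]
    push_cast
    linear_combination (x + 1 + k) * ih

lemma poch_add (x : ℂ) (m k : ℕ) : poch x (m+k) = poch x m * poch (x+(m:ℂ)) k := by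
  induction k with
  | zero => simp [poch]
  | succ k ih =>
    rw [show m+(k+1) = (m+k)+1 from rfl, poch_succ, ih, poch_succ]
    push_cast
    ring

lemma choose_succ_complex (n k : ℕ) :
    ((k:ℂ)+1) * (n.choose (k+1) : ℂ) = ((n:ℂ) - k) * (n.choose k : ℂ) := by
  rcases le_or_gt k n with h | h
  · have h1 := Nat.choose_succ_right_eq n k
    have h2 : ((n.choose (k+1) * (k+1) : ℕ) : ℂ) = ((n.choose k * (n-k) : ℕ) : ℂ) := by
      exact_mod_cast congrArg (Nat.cast : ℕ → ℂ) h1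
    push_cast [Nat.cast_sub h] at h2
    linear_combination h2
  · rw [Nat.choose_eq_zero_of_lt h, Nat.choose_eq_zero_of_lt (Nat.lt_succ_of_lt h)]
    simp

lemma poch_neg_nat (n k : ℕ) :
    poch (-(n:ℂ)) k = (-1)^k * (Nat.factorial k : ℂ) * (n.choose k : ℂ) := by
  induction k with
  | zero => simp [poch]
  | succ k ih =>
    rw [poch_succ, ih]
    have h := choose_succ_complex n k
    push_cast [Nat.factorial_succ]
    linear_combination ((-1:ℂ)^k * (Nat.factorial k : ℂ)) * h


set_option maxHeartbeats 1600000 in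
lemma alg1 (x y a f q c1 c2 c3 p1 p2 : ℂ) (hf : f ≠ 0) (hq : q ≠ 0)
    (he : a + 1 + (x + y) ≠ 0) (hy : y + 1 ≠ 0) (hx : x + 1 ≠ 0)
    (hA : (y+1) * c3 = (x+1-y) * c2) (hB : (x+1-y) * c2 = (x+1) * c1) :
    (x + 2) * (c2 * (a + 2 * y) * p1 * p2 / ((y + 1) * f * (q * (a + 1 + (x + y))))) -
      c1 * (a + 2 * y) * p1 * p2 / ((y + 1) * f * q) =
    -(y + 1) * c3 * (p1 * (a + y)) * (p2 * (a - 1 + y)) /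
        ((x + 1) * ((y + 1) * f) * (q * (a + 1 + (x + y)))) -
      -y * c2 * p1 * p2 / ((x + 1) * f * q) := by
  have hD1 : (y + 1) * f * (q * (a + 1 + (x + y))) ≠ 0 :=
    mul_ne_zero (mul_ne_zero hy hf) (mul_ne_zero hq he)
  have hD2 : (y + 1) * f * q ≠ 0 := mul_ne_zero (mul_ne_zero hy hf) hq
  have hD3 : (x + 1) * ((y + 1) * f) * (q * (a + 1 + (x + y))) ≠ 0 :=
    mul_ne_zero (mul_ne_zero hx (mul_ne_zero hy hf)) (mul_ne_zero hq he)
  have hD4 : (x + 1) * f * q ≠ 0 := mul_ne_zero (mul_ne_zero hx hf) hq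
  rw [← mul_div_assoc, div_sub_div _ _ hD1 hD2, div_sub_div _ _ hD3 hD4,
    div_eq_div_iff (mul_ne_zero hD1 hD2) (mul_ne_zero hD3 hD4)]
  linear_combination
    (p1 * p2 * (a + y) * (a - 1 + y) * ((x + 1) * f * q) *
      ((y + 1) * f * (q * (a + 1 + (x + y)))) * ((y + 1) * f * q)) * hA +
    (((y + 1) * f * (q * (a + 1 + (x + y)))) * ((x + 1) * f * q) *
      ((y + 1) * f * q * (a + 1 + (x + y))) * (a + 2 * y) * p1 * p2) * hB

lemma alg2 (a y f f1 g q p1 p2 pn c : ℂ) (ha : a ≠ 0) (hf : f ≠ 0) (hf1 : f1 ≠ 0)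
    (hg : g ≠ 0) (hq : q ≠ 0) (hpn : pn ≠ 0) :
    p1 * p2 * (f * c) * (g * (a + 2 * y) / a) / (f1 * g * q * f) =
      pn / a * (c * (a + 2 * y) * p1 * p2 / (f1 * (pn * q))) := by
  rw [← mul_div_assoc, div_div, div_mul_div_comm,
    div_eq_div_iff (mul_ne_zero ha (mul_ne_zero (mul_ne_zero (mul_ne_zero hf1 hg) hq) hf))
      (mul_ne_zero ha (mul_ne_zero hf1 (mul_ne_zero hpn hq)))]
  ring

noncomputable def U (a : ℂ) (n k : ℕ) : ℂ :=
  (n.choose k : ℂ) * (a + 2*(k:ℂ)) * poch a k * poch (a-1) k /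
    ((Nat.factorial (k+1) : ℂ) * poch (a+1) (n+k))

noncomputable def W (a : ℂ) (n k : ℕ) : ℂ :=
  -(k:ℂ) * ((n+1).choose k : ℂ) * poch a k * poch (a-1) k /
    (((n:ℂ)+1) * (Nat.factorial k : ℂ) * poch (a+1) (n+k))

set_option maxHeartbeats 1600000 in
lemma tstep (a : ℂ) (ha : ∀ m : ℕ, a ≠ -(m : ℂ)) (n k : ℕ) :
    ((n:ℂ)+2) * U a (n+1) k - U a n k = W a n (k+1) - W a n k := by
  have hbase : ∀ j : ℕ, (a + 1) + (j:ℂ) ≠ 0 := by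
    intro j h
    apply ha (j+1)
    push_cast
    linear_combination h
  have hQ : poch (a+1) (n+k) ≠ 0 := poch_ne_zero _ hbase _
  have hd := hbase (n+k)
  push_cast at hd
  have hfk : (Nat.factorial k : ℂ) ≠ 0 := Nat.cast_ne_zero.mpr (Nat.factorial_ne_zero k)
  have hk1 : ((k:ℂ)+1) ≠ 0 := Nat.cast_add_one_ne_zero k
  have hn1 : ((n:ℂ)+1) ≠ 0 := Nat.cast_add_one_ne_zero n
  have hA : ((k:ℂ)+1) * ((n+1).choose (k+1) : ℂ) = ((n:ℂ)+1-k) * ((n+1).choose k : ℂ) := by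
    have h := choose_succ_complex (n+1) k
    push_cast at h
    linear_combination h
  have hB : ((n:ℂ)+1-k) * ((n+1).choose k : ℂ) = ((n:ℂ)+1) * (n.choose k : ℂ) := by
    have hP : (((n+1).choose (k+1) : ℕ) : ℂ) = (n.choose k : ℂ) + (n.choose (k+1) : ℂ) := by
      exact_mod_cast congrArg (Nat.cast : ℕ → ℂ) (Nat.choose_succ_succ n k)
    have h2 := choose_succ_complex n k
    linear_combination (-1 : ℂ) * hA + ((k:ℂ)+1) * hP + h2
  have hc1 : (n.choose k : ℂ) = ((n:ℂ)+1-k) * ((n+1).choose k : ℂ) / ((n:ℂ)+1) := by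
    rw [eq_div_iff hn1]; linear_combination -hB
  have hc3 : ((n+1).choose (k+1) : ℂ) = ((n:ℂ)+1-k) * ((n+1).choose k : ℂ) / ((k:ℂ)+1) := by
    rw [eq_div_iff hk1]; linear_combination hA
  have e1 : poch (a+1) ((n+1)+k) = poch (a+1) (n+k) * (a + 1 + ((n:ℂ)+k)) := by
    rw [show (n+1)+k = (n+k)+1 by omega, poch_succ]; push_cast; ring
  have e2 : poch (a+1) (n+(k+1)) = poch (a+1) (n+k) * (a + 1 + ((n:ℂ)+k)) := by
    rw [show n+(k+1) = (n+k)+1 by omega, poch_succ]; push_cast; ring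
  have e3 : poch a (k+1) = poch a k * (a + (k:ℂ)) := poch_succ a k
  have e4 : poch (a-1) (k+1) = poch (a-1) k * (a - 1 + (k:ℂ)) := poch_succ (a-1) k
  simp only [U, W, e1, e2, e3, e4]
  push_cast [Nat.factorial_succ]
  exact alg1 (n:ℂ) (k:ℂ) a _ _ _ _ _ _ _ hfk hQ hd hk1 hn1 hA hB

lemma key (a : ℂ) (ha : ∀ m : ℕ, a ≠ -(m : ℂ)) (n : ℕ) :
    ∑ k ∈ Finset.range (n+1), U a n k = a / (Nat.factorial (n+1) : ℂ) := by
  induction n with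
  | zero => simp [U, poch]
  | succ n ih =>
    have htel : ∑ k ∈ Finset.range (n+2), (((n:ℂ)+2) * U a (n+1) k - U a n k)
        = W a n (n+2) - W a n 0 := by
      rw [← Finset.sum_range_sub (fun k => W a n k)]
      exact Finset.sum_congr rfl (fun k _ => tstep a ha n k)
    have hW0 : W a n 0 = 0 := by simp [W]
    have hWend : W a n (n+2) = 0 := by
      have hch : (n+1).choose (n+2) = 0 := Nat.choose_eq_zero_of_lt (by omega)
      simp [W, hch]
    have h1 : ∑ k ∈ Finset.range (n+2), (((n:ℂ)+2) * U a (n+1) k - U a n k) = 0 := by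
      rw [htel, hW0, hWend]; ring
    rw [Finset.sum_sub_distrib, ← Finset.mul_sum, sub_eq_zero] at h1
    have h2 : ∑ k ∈ Finset.range (n+2), U a n k = a / (Nat.factorial (n+1) : ℂ) := by
      rw [Finset.sum_range_succ, ih]
      have hch : n.choose (n+1) = 0 := Nat.choose_eq_zero_of_lt (by omega)
      simp [U, hch]
    rw [h2] at h1
    have hn2 : ((n:ℂ)+2) ≠ 0 := by
      have : ((n+2:ℕ):ℂ) ≠ 0 := Nat.cast_ne_zero.mpr (by omega)
      push_cast at this; exact this
    have hf1 : (Nat.factorial (n+1) : ℂ) ≠ 0 := Nat.cast_ne_zero.mpr (Nat.factorial_ne_zero _)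
    apply mul_left_cancel₀ hn2
    rw [h1]
    rw [show Nat.factorial (n+1+1) = (n+2) * Nat.factorial (n+1) from Nat.factorial_succ (n+1)]
    push_cast
    field_simp

theorem stmt5 (n : ℕ) (a : ℂ) (ha : ∀ m : ℕ, a ≠ -(m : ℂ))
    (han : ∀ m : ℕ, a + n + 1 ≠ -(m : ℂ)) :
    ∑ k ∈ Finset.range (n+1),
      (poch a k * poch (a - 1) k * poch (-(n : ℂ)) k * poch (1 + a/2) k) /
        (poch 2 k * poch (a/2) k * poch ((n : ℂ) + a + 1) k) * (-1) ^ k / (Nat.factorial k : ℂ)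
    = poch (a + 1) n / (Nat.factorial (n+1) : ℂ) := by
  have hA0 : a ≠ 0 := by have := ha 0; simpa using this
  have hPa : ∀ k, poch (a/2) k ≠ 0 := by
    apply poch_ne_zero
    intro j h
    apply ha (2*j)
    push_cast
    linear_combination 2*h
  have hR0 : ∀ k, poch ((n:ℂ)+a+1) k ≠ 0 := by
    apply poch_ne_zero
    intro j h
    apply han j
    linear_combination h
  have hPn : poch (a+1) n ≠ 0 := by
    apply poch_ne_zero
    intro j h
    apply ha (j+1)
    push_cast
    linear_combination h
  have hterm : ∀ k : ℕ, (poch a k * poch (a - 1) k * poch (-(n : ℂ)) k * poch (1 + a/2) k) /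
        (poch 2 k * poch (a/2) k * poch ((n : ℂ) + a + 1) k) * (-1) ^ k / (Nat.factorial k : ℂ)
      = poch (a+1) n / a * U a n k := by
    intro k
    have hPak := hPa k
    have hRk := hR0 k
    have hfk : (Nat.factorial k : ℂ) ≠ 0 := Nat.cast_ne_zero.mpr (Nat.factorial_ne_zero k)
    have hfk1 : (Nat.factorial (k+1) : ℂ) ≠ 0 := Nat.cast_ne_zero.mpr (Nat.factorial_ne_zero (k+1))
    have hsq : ((-1:ℂ))^k * (-1)^k = 1 := by rw [← mul_pow]; norm_num
    have hN' : poch (-(n:ℂ)) k * (-1)^k = (Nat.factorial k : ℂ) * (n.choose k : ℂ) := by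
      rw [poch_neg_nat]
      linear_combination ((Nat.factorial k : ℂ) * (n.choose k : ℂ)) * hsq
    have hM' : poch (1 + a/2) k = poch (a/2) k * (a + 2*(k:ℂ)) / a := by
      have h := poch_shift (a/2) k
      rw [show (a/2 + 1 : ℂ) = 1 + a/2 from by ring] at h
      rw [eq_div_iff hA0]
      linear_combination 2 * h
    have hR : poch (a+1) (n+k) = poch (a+1) n * poch ((n:ℂ)+a+1) k := by
      rw [poch_add, show (a+1+(n:ℂ)) = (n:ℂ)+a+1 from by ring]
    calc (poch a k * poch (a - 1) k * poch (-(n : ℂ)) k * poch (1 + a/2) k) /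
          (poch 2 k * poch (a/2) k * poch ((n : ℂ) + a + 1) k) * (-1) ^ k / (Nat.factorial k : ℂ)
        = (poch a k * poch (a-1) k * (poch (-(n:ℂ)) k * (-1)^k) * poch (1+a/2) k) /
          (poch 2 k * poch (a/2) k * poch ((n:ℂ)+a+1) k * (Nat.factorial k : ℂ)) := by
          ring
      _ = poch (a+1) n / a * U a n k := by
          rw [hN', hM', poch_two, U, hR]
          exact alg2 a (k:ℂ) _ _ _ _ _ _ _ _ hA0 hfk hfk1 hPak hRk hPn
  calc ∑ k ∈ Finset.range (n+1),
      (poch a k * poch (a - 1) k * poch (-(n : ℂ)) k * poch (1 + a/2) k) /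
        (poch 2 k * poch (a/2) k * poch ((n : ℂ) + a + 1) k) * (-1) ^ k / (Nat.factorial k : ℂ)
      = ∑ k ∈ Finset.range (n+1), poch (a+1) n / a * U a n k :=
        Finset.sum_congr rfl (fun k _ => hterm k)
    _ = poch (a+1) n / a * ∑ k ∈ Finset.range (n+1), U a n k := by rw [Finset.mul_sum]
    _ = poch (a+1) n / a * (a / (Nat.factorial (n+1) : ℂ)) := by rw [key a ha n]
    _ = poch (a + 1) n / (Nat.factorial (n+1) : ℂ) := by
        have hf : (Nat.factorial (n+1) : ℂ) ≠ 0 := Nat.cast_ne_zero.mpr (Nat.factorial_ne_zero _)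
        field_simp
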